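/- Soundness of NSMB+: if a nested-sequent of MB+ is provable in NSMB+, then it is valid. -/

import Mathlib

set_option maxHeartbeats 1000000

namespace MBQL

/-- The fixed finite set `J ⊆ [0,1]` of inner-product values, with `0, 1 ∈ J`. -/
structure MBParams where
  J : Set ℝ
  finite : J.Finite
  subI : J ⊆ Set.Icc (0:ℝ) 1
  zero_mem : (0:ℝ) ∈ J
  one_mem : (1:ℝ) ∈ J

/-- Formulas of **MB+**: generated from variables, `⊤`, `⊥` by `¬`, `∧` and
the modalities `□^=_α` (`α ∈ J`, `0 < α ≤ 1`), `□^o_α` (`α ∈ J`) and `□^c_0`. -/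
inductive MBPForm (Pm : MBParams) : Type
  | var : ℕ → MBPForm Pm
  | top : MBPForm Pm
  | bot : MBPForm Pm
  | neg : MBPForm Pm → MBPForm Pm
  | conj : MBPForm Pm → MBPForm Pm → MBPForm Pm
  | boxe : (α : ℝ) → α ∈ Pm.J → 0 < α → MBPForm Pm → MBPForm Pm
  | boxo : (α : ℝ) → α ∈ Pm.J → MBPForm Pm → MBPForm Pm
  | boxc0 : MBPForm Pm → MBPForm Pm

noncomputable instance {Pm : MBParams} : DecidableEq (MBPForm Pm) := Classical.decEq _

/-- Valuation of an MB+-formula, given worlds `S`, a relation `R` and a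
valuation `V` of the propositional variables. -/
def MBPForm.valR {Pm : MBParams} {S : Type} (R : S → S → ℝ) (V : ℕ → Set S) :
    MBPForm Pm → Set S
  | .var n => V n
  | .top => Set.univ
  | .bot => ∅
  | .neg A => (A.valR R V)ᶜ
  | .conj A B => A.valR R V ∩ B.valR R V
  | .boxe α _ _ A => {s | ∀ u, R s u = α → u ∈ A.valR R V}
  | .boxo α _ A => {s | ∀ u, α < R s u → u ∈ A.valR R V}
  | .boxc0 A => {s | ∀ u, u ∈ A.valR R V}

/-- An EQL-frame. -/
structure EQLFrame where
  S : Type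
  nonempty : Nonempty S
  R : S → S → ℝ
  mem_Icc : ∀ s t, R s t ∈ Set.Icc (0:ℝ) 1
  eq_one_iff : ∀ s t, (R s t = 1 ↔ s = t)
  symm : ∀ s t, R s t = R t s

/-- An MB-realization for the language of MB+. -/
structure MBPRealization (Pm : MBParams) where
  F : EQLFrame
  P : Set (Set F.S)
  univ_mem : Set.univ ∈ P
  empty_mem : ∅ ∈ P
  inter_mem : ∀ X ∈ P, ∀ Y ∈ P, X ∩ Y ∈ P
  compl_mem : ∀ X ∈ P, Xᶜ ∈ P
  boxe_mem : ∀ α ∈ Pm.J, 0 < α → ∀ X ∈ P, {s | ∀ u, F.R s u = α → u ∈ X} ∈ P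
  boxo_mem : ∀ α ∈ Pm.J, ∀ X ∈ P, {s | ∀ u, α < F.R s u → u ∈ X} ∈ P
  boxc0_mem : ∀ X ∈ P, {s | ∀ u, u ∈ X} ∈ P
  V : ℕ → Set F.S
  V_mem : ∀ n, V n ∈ P

/-- The extended valuation in an MB+-realization. -/
def MBPRealization.val {Pm : MBParams} (M : MBPRealization Pm) (A : MBPForm Pm) :
    Set M.F.S := A.valR M.F.R M.V

/-- Validity of an MB+-formula. -/
def MBPValid {Pm : MBParams} (A : MBPForm Pm) : Prop :=
  ∀ (M : MBPRealization Pm) (s : M.F.S), s ∈ M.val A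

/-- Bracket labels for nested-sequents of MB+: `[·]^=_α` (`0 < α ≤ 1`),
`[·]^o_α` (`α ≠ 1`) and `[·]^c_0`. -/
inductive PLab (Pm : MBParams) : Type
  | eq : (α : ℝ) → α ∈ Pm.J → 0 < α → PLab Pm
  | o : (α : ℝ) → α ∈ Pm.J → α ≠ 1 → PLab Pm
  | c0 : PLab Pm

mutual
/-- Nested-sequents of MB+. -/
inductive PNSeq (Pm : MBParams) : Type
  | node : Finset (MBPForm Pm) → Finset (MBPForm Pm) → PNSeqs Pm → PNSeq Pm
/-- A finite list of labelled child nested-sequents of MB+. -/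
inductive PNSeqs (Pm : MBParams) : Type
  | nil : PNSeqs Pm
  | cons : PLab Pm → PNSeq Pm → PNSeqs Pm → PNSeqs Pm
end

/-- The `i`-th labelled child. -/
def PNSeqs.get {Pm : MBParams} : PNSeqs Pm → ℕ → Option (PLab Pm × PNSeq Pm)
  | .nil, _ => none
  | .cons l t _, 0 => some (l, t)
  | .cons _ _ ts, n+1 => ts.get n

/-- `PSubAt t p u`: the subtree of `t` at the node address `p` is `u`. -/
inductive PSubAt {Pm : MBParams} : PNSeq Pm → List ℕ → PNSeq Pm → Prop
  | here (t : PNSeq Pm) : PSubAt t [] t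
  | there {Γ Δ : Finset (MBPForm Pm)} {ts : PNSeqs Pm} {i : ℕ} {l : PLab Pm}
      {u v : PNSeq Pm} {p : List ℕ} :
      PNSeqs.get ts i = some (l, u) → PSubAt u p v → PSubAt (.node Γ Δ ts) (i :: p) v

mutual
/-- Replace the sequent at the node with address `p` by `Γ' ⇒ Δ'`. -/
def PNSeq.setSeq {Pm : MBParams} :
    PNSeq Pm → List ℕ → Finset (MBPForm Pm) → Finset (MBPForm Pm) → PNSeq Pm
  | .node _ _ ts, [], Γ', Δ' => .node Γ' Δ' ts
  | .node Γ Δ ts, i :: p, Γ', Δ' => .node Γ Δ (PNSeqs.setSeqs ts i p Γ' Δ')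
def PNSeqs.setSeqs {Pm : MBParams} :
    PNSeqs Pm → ℕ → List ℕ → Finset (MBPForm Pm) → Finset (MBPForm Pm) → PNSeqs Pm
  | .nil, _, _, _, _ => .nil
  | .cons l t ts, 0, p, Γ', Δ' => .cons l (t.setSeq p Γ' Δ') ts
  | .cons l t ts, n+1, p, Γ', Δ' => .cons l t (PNSeqs.setSeqs ts n p Γ' Δ')
end

/-- Append a labelled child at the end of a children list. -/
def PNSeqs.snoc {Pm : MBParams} : PNSeqs Pm → PLab Pm → PNSeq Pm → PNSeqs Pm
  | .nil, l, u => .cons l u .nil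
  | .cons l' t ts, l, u => .cons l' t (ts.snoc l u)

mutual
/-- Add a new child `[u]_l` at the node with address `p`. -/
def PNSeq.addChild {Pm : MBParams} : PNSeq Pm → List ℕ → PLab Pm → PNSeq Pm → PNSeq Pm
  | .node Γ Δ ts, [], l, u => .node Γ Δ (ts.snoc l u)
  | .node Γ Δ ts, i :: p, l, u => .node Γ Δ (PNSeqs.addChilds ts i p l u)
def PNSeqs.addChilds {Pm : MBParams} :
    PNSeqs Pm → ℕ → List ℕ → PLab Pm → PNSeq Pm → PNSeqs Pm
  | .nil, _, _, _, _ => .nil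
  | .cons l' t ts, 0, p, l, u => .cons l' (t.addChild p l u) ts
  | .cons l' t ts, n+1, p, l, u => .cons l' t (PNSeqs.addChilds ts n p l u)
end

/-- `A ∨ B`. -/
def MBPForm.or {Pm : MBParams} (A B : MBPForm Pm) : MBPForm Pm :=
  .neg (.conj (.neg A) (.neg B))

/-- `A → B := ¬A ∨ B`. -/
def MBPForm.imp {Pm : MBParams} (A B : MBPForm Pm) : MBPForm Pm := (MBPForm.neg A).or B

/-- Conjunction of a list of formulas. -/
def pconjList {Pm : MBParams} : List (MBPForm Pm) → MBPForm Pm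
  | [] => .top
  | [A] => A
  | A :: B :: rest => .conj A (pconjList (B :: rest))

/-- Disjunction of a list of formulas. -/
def pdisjList {Pm : MBParams} : List (MBPForm Pm) → MBPForm Pm
  | [] => .bot
  | [A] => A
  | A :: B :: rest => (A).or (pdisjList (B :: rest))

/-- `⋀Γ → ⋁Δ`. -/
noncomputable def pseqForm {Pm : MBParams} (Γ Δ : Finset (MBPForm Pm)) : MBPForm Pm :=
  (pconjList Γ.toList).imp (pdisjList Δ.toList)

/-- The box corresponding to a bracket label of MB+. -/
def PLab.box {Pm : MBParams} : PLab Pm → MBPForm Pm → MBPForm Pm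
  | .eq α h h0, A => .boxe α h h0 A
  | .o α h _, A => .boxo α h A
  | .c0, A => .boxc0 A

mutual
/-- The interpretation `τ` of an MB+ nested-sequent as an MB+-formula. -/
noncomputable def PNSeq.tau {Pm : MBParams} : PNSeq Pm → MBPForm Pm
  | .node Γ Δ ts => PNSeqs.tauAux (pseqForm Γ Δ) ts
noncomputable def PNSeqs.tauAux {Pm : MBParams} : MBPForm Pm → PNSeqs Pm → MBPForm Pm
  | A, .nil => A
  | A, .cons l t ts => PNSeqs.tauAux (A.or (l.box t.tau)) ts
end

/-- The condition imposed on `R(E(n₁), E(n₂))` by a bracket label of MB+. -/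
def PLabCond {Pm : MBParams} (l : PLab Pm) (r : ℝ) : Prop :=
  match l with
  | .eq α _ _ => r = α
  | .o α _ _ => α < r
  | .c0 => True

/-- `E` is an embedding of the MB+ nested-sequent `t` into `M`. -/
def PIsEmb {Pm : MBParams} (M : MBPRealization Pm) (t : PNSeq Pm)
    (E : List ℕ → M.F.S) : Prop :=
  ∀ p Γ Δ ts i l u, PSubAt t p (.node Γ Δ ts) → PNSeqs.get ts i = some (l, u) →
    PLabCond l (M.F.R (E p) (E (p ++ [i])))

/-- The MB+ nested-sequent `t` is false in `M` under `E`. -/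
def PFalseUnder {Pm : MBParams} (M : MBPRealization Pm) (t : PNSeq Pm)
    (E : List ℕ → M.F.S) : Prop :=
  ∀ p Γ Δ ts, PSubAt t p (.node Γ Δ ts) →
    (∀ A ∈ Γ, E p ∈ M.val A) ∧ (∀ A ∈ Δ, E p ∉ M.val A)

/-- Validity of an MB+ nested-sequent. -/
def PNSValid {Pm : MBParams} (t : PNSeq Pm) : Prop :=
  ∀ (M : MBPRealization Pm) (E : List ℕ → M.F.S), PIsEmb M t E → ¬ PFalseUnder M t E

/-- Descriptors of the left-rule boxes `□^=_α`, `□^o_α` of MB+. -/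
inductive PBox (Pm : MBParams) : Type
  | e : (α : ℝ) → α ∈ Pm.J → 0 < α → PBox Pm
  | o : (α : ℝ) → α ∈ Pm.J → PBox Pm

/-- The box formula corresponding to a box descriptor. -/
def PBox.box {Pm : MBParams} : PBox Pm → MBPForm Pm → MBPForm Pm
  | .e α h h0, A => .boxe α h h0 A
  | .o α h, A => .boxo α h A

/-- Side condition of the rules (□L), (□L sym) of NSMB+:
`(d = d' = "=" and α = β)`, or `(d = d' = o and α < β)`, or
`(d = o, d' = "=" and α < β)`. -/
def PC1 {Pm : MBParams} : PBox Pm → PLab Pm → Prop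
  | .e α _ _, .eq β _ _ => α = β
  | .o α _, .o β _ _ => α < β
  | .o α _, .eq β _ _ => α < β
  | _, _ => False

/-- Side condition of the rule (□L self) of NSMB+:
`(d = "=" and α = 1)` or `(d = o and α ≠ 1)`. -/
def PC2 {Pm : MBParams} : PBox Pm → Prop
  | .e α _ _ => α = 1
  | .o α _ => α ≠ 1

/-- Provability in the nested-sequent calculus **NSMB+**; the boolean records
whether (cut) may be used. -/
inductive PProvable {Pm : MBParams} : Bool → PNSeq Pm → Prop
  /-- axiom `‖A, Γ ⇒ Δ, A, T‖` -/
  | axId {cut : Bool} {t : PNSeq Pm} {p Γ Δ ts A} :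
      PSubAt t p (.node Γ Δ ts) → A ∈ Γ → A ∈ Δ → PProvable cut t
  /-- axiom `‖Γ ⇒ Δ, ⊤, T‖` -/
  | axTop {cut : Bool} {t : PNSeq Pm} {p Γ Δ ts} :
      PSubAt t p (.node Γ Δ ts) → MBPForm.top ∈ Δ → PProvable cut t
  /-- axiom `‖⊥, Γ ⇒ Δ, T‖` -/
  | axBot {cut : Bool} {t : PNSeq Pm} {p Γ Δ ts} :
      PSubAt t p (.node Γ Δ ts) → MBPForm.bot ∈ Γ → PProvable cut t
  /-- axiom `‖Γ ⇒ Δ, □^o_1 A, T‖` -/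
  | axBoxO1 {cut : Bool} {t : PNSeq Pm} {p Γ Δ ts A} :
      PSubAt t p (.node Γ Δ ts) → MBPForm.boxo 1 Pm.one_mem A ∈ Δ → PProvable cut t
  /-- rule (cut) -/
  | cutR {t : PNSeq Pm} {p Γ Δ ts A} :
      PSubAt t p (.node Γ Δ ts) →
      PProvable true (t.setSeq p Γ (insert A Δ)) →
      PProvable true (t.setSeq p (insert A Γ) Δ) →
      PProvable true t
  /-- rule (wL) -/
  | wL {cut : Bool} {t : PNSeq Pm} {p Γ Δ ts A} :
      PSubAt t p (.node Γ Δ ts) → PProvable cut t →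
      PProvable cut (t.setSeq p (insert A Γ) Δ)
  /-- rule (wR) -/
  | wR {cut : Bool} {t : PNSeq Pm} {p Γ Δ ts A} :
      PSubAt t p (.node Γ Δ ts) → PProvable cut t →
      PProvable cut (t.setSeq p Γ (insert A Δ))
  /-- rule (¬L) -/
  | negL {cut : Bool} {t : PNSeq Pm} {p Γ Δ ts A} :
      PSubAt t p (.node Γ Δ ts) →
      PProvable cut (t.setSeq p Γ (insert A Δ)) →
      PProvable cut (t.setSeq p (insert (MBPForm.neg A) Γ) Δ)
  /-- rule (¬R) -/
  | negR {cut : Bool} {t : PNSeq Pm} {p Γ Δ ts A} :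
      PSubAt t p (.node Γ Δ ts) →
      PProvable cut (t.setSeq p (insert A Γ) Δ) →
      PProvable cut (t.setSeq p Γ (insert (MBPForm.neg A) Δ))
  /-- rule (∧L) -/
  | andL {cut : Bool} {t : PNSeq Pm} {p Γ Δ ts A B} :
      PSubAt t p (.node Γ Δ ts) →
      PProvable cut (t.setSeq p (insert A (insert B Γ)) Δ) →
      PProvable cut (t.setSeq p (insert (MBPForm.conj A B) Γ) Δ)
  /-- rule (∧R) -/
  | andR {cut : Bool} {t : PNSeq Pm} {p Γ Δ ts A B} :
      PSubAt t p (.node Γ Δ ts) →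
      PProvable cut (t.setSeq p Γ (insert A Δ)) →
      PProvable cut (t.setSeq p Γ (insert B Δ)) →
      PProvable cut (t.setSeq p Γ (insert (MBPForm.conj A B) Δ))
  /-- rule (□L) of NSMB+ -/
  | boxL {cut : Bool} {t : PNSeq Pm} {p Γ Δ ts i l u Γ' Δ' ts' A} {b : PBox Pm} :
      PSubAt t p (.node Γ Δ ts) → PNSeqs.get ts i = some (l, u) →
      PSubAt t (p ++ [i]) (.node Γ' Δ' ts') →
      PC1 b l →
      PProvable cut (t.setSeq (p ++ [i]) (insert A Γ') Δ') →
      PProvable cut (t.setSeq p (insert (b.box A) Γ) Δ)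
  /-- rule (□L sym) of NSMB+ -/
  | boxLsym {cut : Bool} {t : PNSeq Pm} {p Γ Δ ts i l u Γ' Δ' ts' A} {b : PBox Pm} :
      PSubAt t p (.node Γ Δ ts) → PNSeqs.get ts i = some (l, u) →
      PSubAt t (p ++ [i]) (.node Γ' Δ' ts') →
      PC1 b l →
      PProvable cut (t.setSeq p (insert A Γ) Δ) →
      PProvable cut (t.setSeq (p ++ [i]) (insert (b.box A) Γ') Δ')
  /-- rule (□L self) of NSMB+ -/
  | boxLself {cut : Bool} {t : PNSeq Pm} {p Γ Δ ts A} {b : PBox Pm} :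
      PSubAt t p (.node Γ Δ ts) → PC2 b →
      PProvable cut (t.setSeq p (insert A Γ) Δ) →
      PProvable cut (t.setSeq p (insert (b.box A) Γ) Δ)
  /-- rule (□^c_0) -/
  | boxC0 {cut : Bool} {t : PNSeq Pm} {p Γ Δ ts q Γ'' Δ'' ts'' A} :
      PSubAt t p (.node Γ Δ ts) → PSubAt t q (.node Γ'' Δ'' ts'') →
      PProvable cut (t.setSeq p (insert A Γ) Δ) →
      PProvable cut (t.setSeq q (insert (MBPForm.boxc0 A) Γ'') Δ'')
  /-- rule (□R) -/
  | boxR {cut : Bool} {t : PNSeq Pm} {p Γ Δ ts A} {l : PLab Pm} :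
      PSubAt t p (.node Γ Δ ts) →
      PProvable cut (t.addChild p l (.node ∅ {A} .nil)) →
      PProvable cut (t.setSeq p Γ (insert (l.box A) Δ))
  /-- rule (= R self) -/
  | eqRself {cut : Bool} {t : PNSeq Pm} {p Γ Δ ts A} :
      PSubAt t p (.node Γ Δ ts) →
      PProvable cut (t.setSeq p Γ (insert A Δ)) →
      PProvable cut (t.setSeq p Γ (insert (MBPForm.boxe 1 Pm.one_mem one_pos A) Δ))


/-! ### Auxiliary infrastructure -/

def PNSeq.lhs {Pm : MBParams} : PNSeq Pm → Finset (MBPForm Pm) | .node Γ _ _ => Γ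
def PNSeq.rhs {Pm : MBParams} : PNSeq Pm → Finset (MBPForm Pm) | .node _ Δ _ => Δ
def PNSeq.children {Pm : MBParams} : PNSeq Pm → PNSeqs Pm | .node _ _ ts => ts

def PNSeqs.len {Pm : MBParams} : PNSeqs Pm → ℕ
  | .nil => 0
  | .cons _ _ ts => ts.len + 1

mutual
def seqAt {Pm : MBParams} : PNSeq Pm → List ℕ → Option (Finset (MBPForm Pm) × Finset (MBPForm Pm))
  | .node Γ Δ _, [] => some (Γ, Δ)
  | .node _ _ ts, i :: p => seqAts ts i p
def seqAts {Pm : MBParams} : PNSeqs Pm → ℕ → List ℕ → Option (Finset (MBPForm Pm) × Finset (MBPForm Pm))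
  | .nil, _, _ => none
  | .cons _ t _, 0, p => seqAt t p
  | .cons _ _ ts, n+1, p => seqAts ts n p
end

mutual
def childLab {Pm : MBParams} : PNSeq Pm → List ℕ → ℕ → Option (PLab Pm)
  | .node _ _ ts, [], i => (ts.get i).map Prod.fst
  | .node _ _ ts, j :: q, i => childLabs ts j q i
def childLabs {Pm : MBParams} : PNSeqs Pm → ℕ → List ℕ → ℕ → Option (PLab Pm)
  | .nil, _, _, _ => none
  | .cons _ t _, 0, q, i => childLab t q i
  | .cons _ _ ts, n+1, q, i => childLabs ts n q i
end

theorem seqAts_eq {Pm : MBParams} :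
    ∀ (ts : PNSeqs Pm) (i : ℕ) (p : List ℕ),
      seqAts ts i p = (ts.get i).bind (fun x => seqAt x.2 p)
  | .nil, i, p => by cases i <;> rfl
  | .cons _ _ _, 0, _ => rfl
  | .cons _ _ ts, n+1, p => seqAts_eq ts n p

theorem childLabs_eq {Pm : MBParams} :
    ∀ (ts : PNSeqs Pm) (j : ℕ) (q : List ℕ) (i : ℕ),
      childLabs ts j q i = (ts.get j).bind (fun x => childLab x.2 q i)
  | .nil, j, _, _ => by cases j <;> rfl
  | .cons _ _ _, 0, _, _ => rfl
  | .cons _ _ ts, n+1, q, i => childLabs_eq ts n q i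

theorem get_setSeqs {Pm : MBParams} :
    ∀ (ts : PNSeqs Pm) (i : ℕ) (p : List ℕ) Γ' Δ' (j : ℕ),
      (PNSeqs.setSeqs ts i p Γ' Δ').get j =
        if j = i then (ts.get j).map (fun x => (x.1, x.2.setSeq p Γ' Δ')) else ts.get j
  | .nil, i, p, Γ', Δ', j => by
      cases j <;> simp [PNSeqs.setSeqs, PNSeqs.get] <;> split <;> rfl
  | .cons l t ts, 0, p, Γ', Δ', 0 => rfl
  | .cons l t ts, 0, p, Γ', Δ', (m+1) => by simp [PNSeqs.setSeqs, PNSeqs.get]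
  | .cons l t ts, n+1, p, Γ', Δ', 0 => by simp [PNSeqs.setSeqs, PNSeqs.get]
  | .cons l t ts, n+1, p, Γ', Δ', (m+1) => by
      simp only [PNSeqs.setSeqs, PNSeqs.get, get_setSeqs ts n p Γ' Δ' m,
        Nat.add_right_cancel_iff]

theorem get_addChilds {Pm : MBParams} :
    ∀ (ts : PNSeqs Pm) (i : ℕ) (p : List ℕ) (l : PLab Pm) (u : PNSeq Pm) (j : ℕ),
      (PNSeqs.addChilds ts i p l u).get j =
        if j = i then (ts.get j).map (fun x => (x.1, x.2.addChild p l u)) else ts.get j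
  | .nil, i, p, l, u, j => by
      cases j <;> simp [PNSeqs.addChilds, PNSeqs.get] <;> split <;> rfl
  | .cons l' t ts, 0, p, l, u, 0 => rfl
  | .cons l' t ts, 0, p, l, u, (m+1) => by simp [PNSeqs.addChilds, PNSeqs.get]
  | .cons l' t ts, n+1, p, l, u, 0 => by simp [PNSeqs.addChilds, PNSeqs.get]
  | .cons l' t ts, n+1, p, l, u, (m+1) => by
      simp only [PNSeqs.addChilds, PNSeqs.get, get_addChilds ts n p l u m, Nat.add_right_cancel_iff]

theorem get_snoc {Pm : MBParams} :
    ∀ (ts : PNSeqs Pm) (l : PLab Pm) (u : PNSeq Pm) (i : ℕ),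
      (ts.snoc l u).get i = if i = ts.len then some (l, u) else ts.get i
  | .nil, l, u, 0 => rfl
  | .nil, l, u, (m+1) => by simp [PNSeqs.snoc, PNSeqs.get, PNSeqs.len]
  | .cons l' t ts, l, u, 0 => by simp [PNSeqs.snoc, PNSeqs.get, PNSeqs.len]
  | .cons l' t ts, l, u, (m+1) => by
      simp only [PNSeqs.snoc, PNSeqs.get, get_snoc ts l u m, PNSeqs.len, Nat.add_right_cancel_iff]

theorem get_len {Pm : MBParams} :
    ∀ (ts : PNSeqs Pm), ts.get ts.len = none
  | .nil => rfl
  | .cons _ _ ts => get_len ts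
theorem subAt_char {Pm : MBParams} {t : PNSeq Pm} {p : List ℕ} {v : PNSeq Pm}
    (h : PSubAt t p v) :
    seqAt t p = some (v.lhs, v.rhs) ∧
    (∀ i, childLab t p i = (v.children.get i).map Prod.fst) ∧
    (∀ i r, seqAt t (p ++ i :: r) = (v.children.get i).bind fun x => seqAt x.2 r) ∧
    (∀ i r i', childLab t (p ++ i :: r) i' =
        (v.children.get i).bind fun x => childLab x.2 r i') := by
  induction h with
  | here t =>
      cases t with
      | node Γ Δ ts =>
          refine ⟨rfl, fun i => rfl, fun i r => ?_, fun i r i' => ?_⟩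
          · simpa [seqAt, PNSeq.children] using seqAts_eq ts i r
          · simpa [childLab, PNSeq.children] using childLabs_eq ts i r i'
  | there hg hs ih =>
      rename_i Γ Δ ts i l u v p
      refine ⟨?_, fun j => ?_, fun j r => ?_, fun j r i' => ?_⟩
      · show seqAts ts i p = _
        rw [seqAts_eq, hg]; exact ih.1
      · show childLabs ts i p j = _
        rw [childLabs_eq, hg]; exact ih.2.1 j
      · show seqAts ts i (p ++ j :: r) = _
        rw [seqAts_eq, hg]; exact ih.2.2.1 j r
      · show childLabs ts i (p ++ j :: r) i' = _
        rw [childLabs_eq, hg]; exact ih.2.2.2 j r i'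

theorem seqAt_subAt {Pm : MBParams} :
    ∀ (p : List ℕ) (t : PNSeq Pm) Γ Δ, seqAt t p = some (Γ, Δ) →
      ∃ ts, PSubAt t p (.node Γ Δ ts) := by
  intro p
  induction p with
  | nil =>
      intro t Γ Δ h
      cases t with
      | node Γ₀ Δ₀ ts =>
          simp [seqAt] at h
          exact ⟨ts, h.1 ▸ h.2 ▸ PSubAt.here _⟩
  | cons i p ih =>
      intro t Γ Δ h
      cases t with
      | node Γ₀ Δ₀ ts =>
          have h' : seqAts ts i p = some (Γ, Δ) := h
          rw [seqAts_eq] at h'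
          cases hg : ts.get i with
          | none => rw [hg] at h'; simp at h'
          | some x =>
              rw [hg] at h'; simp at h'
              obtain ⟨ts', hs⟩ := ih x.2 Γ Δ h'
              exact ⟨ts', PSubAt.there (by rw [hg]) hs⟩

theorem childLab_inv {Pm : MBParams} :
    ∀ (q : List ℕ) (t : PNSeq Pm) (i : ℕ) (l : PLab Pm), childLab t q i = some l →
      ∃ Γ Δ ts u, PSubAt t q (.node Γ Δ ts) ∧ ts.get i = some (l, u) := by
  intro q
  induction q with
  | nil =>
      intro t i l h
      cases t with
      | node Γ Δ ts =>
          have h' : (ts.get i).map Prod.fst = some l := h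
          cases hg : ts.get i with
          | none => rw [hg] at h'; simp at h'
          | some x =>
              rw [hg] at h'; simp at h'
              exact ⟨Γ, Δ, ts, x.2, PSubAt.here _, by rw [hg, ← h']⟩
  | cons j q ih =>
      intro t i l h
      cases t with
      | node Γ₀ Δ₀ ts =>
          have h' : childLabs ts j q i = some l := h
          rw [childLabs_eq] at h'
          cases hg : ts.get j with
          | none => rw [hg] at h'; simp at h'
          | some x =>
              rw [hg] at h'; simp at h'
              obtain ⟨Γ, Δ, ts', u, hs, hgi⟩ := ih x.2 i l h'
              exact ⟨Γ, Δ, ts', u, PSubAt.there hg hs, hgi⟩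

theorem emb_iff {Pm : MBParams} {M : MBPRealization Pm} {t : PNSeq Pm} {E : List ℕ → M.F.S} :
    PIsEmb M t E ↔
      ∀ q i l, childLab t q i = some l → PLabCond l (M.F.R (E q) (E (q ++ [i]))) := by
  constructor
  · intro h q i l hc
    obtain ⟨Γ, Δ, ts, u, hs, hg⟩ := childLab_inv q t i l hc
    exact h q Γ Δ ts i l u hs hg
  · intro h p Γ Δ ts i l u hs hg
    apply h
    rw [(subAt_char hs).2.1 i]
    show (ts.get i).map Prod.fst = _
    rw [hg]; rfl

theorem false_iff {Pm : MBParams} {M : MBPRealization Pm} {t : PNSeq Pm} {E : List ℕ → M.F.S} :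
    PFalseUnder M t E ↔
      ∀ q Γ Δ, seqAt t q = some (Γ, Δ) →
        (∀ A ∈ Γ, E q ∈ M.val A) ∧ (∀ A ∈ Δ, E q ∉ M.val A) := by
  constructor
  · intro h q Γ Δ hs
    obtain ⟨ts, hsub⟩ := seqAt_subAt q t Γ Δ hs
    exact h q Γ Δ ts hsub
  · intro h p Γ Δ ts hs
    exact h p Γ Δ (subAt_char hs).1
theorem seqAts_get' {Pm : MBParams} {ts : PNSeqs Pm} {i : ℕ} {l : PLab Pm} {u : PNSeq Pm}
    (hg : ts.get i = some (l, u)) (p : List ℕ) : seqAts ts i p = seqAt u p := by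
  rw [seqAts_eq, hg]; rfl

theorem seqAts_none {Pm : MBParams} {ts : PNSeqs Pm} {i : ℕ}
    (hg : ts.get i = none) (p : List ℕ) : seqAts ts i p = none := by
  rw [seqAts_eq, hg]; rfl

theorem childLabs_get' {Pm : MBParams} {ts : PNSeqs Pm} {j : ℕ} {l : PLab Pm} {u : PNSeq Pm}
    (hg : ts.get j = some (l, u)) (q : List ℕ) (i : ℕ) : childLabs ts j q i = childLab u q i := by
  rw [childLabs_eq, hg]; rfl

theorem childLabs_none {Pm : MBParams} {ts : PNSeqs Pm} {j : ℕ}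
    (hg : ts.get j = none) (q : List ℕ) (i : ℕ) : childLabs ts j q i = none := by
  rw [childLabs_eq, hg]; rfl

@[simp] theorem children_node {Pm : MBParams} (Γ Δ : Finset (MBPForm Pm)) (ts : PNSeqs Pm) :
    (PNSeq.node Γ Δ ts).children = ts := rfl
@[simp] theorem lhs_node {Pm : MBParams} (Γ Δ : Finset (MBPForm Pm)) (ts : PNSeqs Pm) :
    (PNSeq.node Γ Δ ts).lhs = Γ := rfl
@[simp] theorem rhs_node {Pm : MBParams} (Γ Δ : Finset (MBPForm Pm)) (ts : PNSeqs Pm) :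
    (PNSeq.node Γ Δ ts).rhs = Δ := rfl

theorem seqAt_setSeq {Pm : MBParams} :
    ∀ (p : List ℕ) (t : PNSeq Pm) Γ' Δ' (q : List ℕ),
      seqAt (t.setSeq p Γ' Δ') q =
        if q = p then (seqAt t p).map (fun _ => (Γ', Δ')) else seqAt t q := by
  intro p
  induction p with
  | nil =>
      intro t Γ' Δ' q
      cases t with
      | node Γ Δ ts =>
          cases q with
          | nil => simp [PNSeq.setSeq, seqAt]
          | cons j r => simp [PNSeq.setSeq, seqAt]
  | cons i p ih =>
      intro t Γ' Δ' q
      cases t with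
      | node Γ Δ ts =>
          cases q with
          | nil => simp [PNSeq.setSeq, seqAt]
          | cons j r =>
              show seqAts (PNSeqs.setSeqs ts i p Γ' Δ') j r = _
              by_cases hj : j = i
              · subst hj
                cases hg : ts.get j with
                | none =>
                    have h1 : (PNSeqs.setSeqs ts j p Γ' Δ').get j = none := by
                      rw [get_setSeqs, if_pos rfl, hg]; rfl
                    rw [seqAts_none h1]
                    have h2 : ∀ r', seqAt (PNSeq.node Γ Δ ts) (j :: r') = none :=
                      fun r' => seqAts_none hg r'
                    by_cases hr : r = p
                    · subst hr; rw [if_pos rfl, h2 r]; rfl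
                    · rw [if_neg (by simp [hr]), h2 r]
                | some x =>
                    obtain ⟨l₀, u₀⟩ := x
                    have h1 : (PNSeqs.setSeqs ts j p Γ' Δ').get j
                        = some (l₀, u₀.setSeq p Γ' Δ') := by
                      rw [get_setSeqs, if_pos rfl, hg]; rfl
                    rw [seqAts_get' h1, ih u₀ Γ' Δ' r]
                    have e1 : ∀ r', seqAt (PNSeq.node Γ Δ ts) (j :: r') = seqAt u₀ r' :=
                      fun r' => seqAts_get' hg r'
                    rw [e1 p, e1 r]
                    by_cases hr : r = p
                    · subst hr; rw [if_pos rfl, if_pos rfl]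
                    · rw [if_neg hr, if_neg (by simp [hr])]
              · have h1 : (PNSeqs.setSeqs ts i p Γ' Δ').get j = ts.get j := by
                  rw [get_setSeqs, if_neg hj]
                rw [if_neg (by simp [hj])]
                show _ = seqAts ts j r
                rw [seqAts_eq, seqAts_eq, h1]

theorem childLab_setSeq {Pm : MBParams} :
    ∀ (p : List ℕ) (t : PNSeq Pm) Γ' Δ' (q : List ℕ) (i : ℕ),
      childLab (t.setSeq p Γ' Δ') q i = childLab t q i := by
  intro p
  induction p with
  | nil =>
      intro t Γ' Δ' q i
      cases t with
      | node Γ Δ ts => cases q <;> rfl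
  | cons j p ih =>
      intro t Γ' Δ' q i
      cases t with
      | node Γ Δ ts =>
          cases q with
          | nil =>
              show (PNSeqs.get (PNSeqs.setSeqs ts j p Γ' Δ') i).map Prod.fst
                  = (ts.get i).map Prod.fst
              rw [get_setSeqs]
              by_cases hi : i = j
              · rw [if_pos hi]; cases ts.get i <;> rfl
              · rw [if_neg hi]
          | cons j' r =>
              show childLabs (PNSeqs.setSeqs ts j p Γ' Δ') j' r i = childLabs ts j' r i
              by_cases hj : j' = j
              · subst hj
                cases hg : ts.get j' with
                | none =>
                    have h1 : (PNSeqs.setSeqs ts j' p Γ' Δ').get j' = none := by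
                      rw [get_setSeqs, if_pos rfl, hg]; rfl
                    rw [childLabs_none h1, childLabs_none hg]
                | some x =>
                    obtain ⟨l₀, u₀⟩ := x
                    have h1 : (PNSeqs.setSeqs ts j' p Γ' Δ').get j'
                        = some (l₀, u₀.setSeq p Γ' Δ') := by
                      rw [get_setSeqs, if_pos rfl, hg]; rfl
                    rw [childLabs_get' h1, childLabs_get' hg, ih]
              · have h1 : (PNSeqs.setSeqs ts j p Γ' Δ').get j' = ts.get j' := by
                  rw [get_setSeqs, if_neg hj]
                rw [childLabs_eq, childLabs_eq, h1]

theorem seqAt_addChild {Pm : MBParams} {t : PNSeq Pm} {p : List ℕ} {v : PNSeq Pm}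
    (h : PSubAt t p v) (l : PLab Pm) (Γu Δu : Finset (MBPForm Pm)) :
    ∀ q, seqAt (t.addChild p l (.node Γu Δu .nil)) q =
      if q = p ++ [v.children.len] then some (Γu, Δu) else seqAt t q := by
  induction h with
  | here t =>
      cases t with
      | node Γ Δ ts =>
          intro q
          rw [children_node, List.nil_append]
          cases q with
          | nil => rw [if_neg (by simp)]; rfl
          | cons j r =>
              show seqAts (ts.snoc l _) j r = _
              by_cases hj : j = ts.len
              · have h1 : (ts.snoc l (PNSeq.node Γu Δu .nil)).get j
                    = some (l, PNSeq.node Γu Δu .nil) := by rw [get_snoc, if_pos hj]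
                rw [seqAts_get' h1]
                cases r with
                | nil => rw [if_pos (by rw [hj])]; rfl
                | cons r0 r1 =>
                    rw [if_neg (by simp)]
                    show seqAts PNSeqs.nil r0 r1 = seqAts ts j (r0 :: r1)
                    rw [seqAts_none (show ts.get j = none by rw [hj]; exact get_len ts)]
                    rfl
              · have h1 : (ts.snoc l (PNSeq.node Γu Δu .nil)).get j = ts.get j := by
                  rw [get_snoc, if_neg hj]
                rw [if_neg (by simp [hj])]
                show _ = seqAts ts j r
                rw [seqAts_eq, seqAts_eq, h1]
  | there hg hs ih =>
      rename_i Γ Δ ts i l' u v p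
      intro q
      cases q with
      | nil => rw [if_neg (by simp)]; rfl
      | cons j r =>
          show seqAts (PNSeqs.addChilds ts i p l _) j r = _
          by_cases hj : j = i
          · subst hj
            have h1 : (PNSeqs.addChilds ts j p l (PNSeq.node Γu Δu .nil)).get j
                = some (l', u.addChild p l (PNSeq.node Γu Δu .nil)) := by
              rw [get_addChilds, if_pos rfl, hg]; rfl
            rw [seqAts_get' h1, ih r]
            have e1 : ∀ r', seqAt (PNSeq.node Γ Δ ts) (j :: r') = seqAt u r' :=
              fun r' => seqAts_get' hg r'
            rw [e1 r]
            by_cases hr : r = p ++ [v.children.len]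
            · subst hr; rw [if_pos rfl, if_pos (by simp)]
            · rw [if_neg hr, if_neg (by simp [hr])]
          · have h1 : (PNSeqs.addChilds ts i p l (PNSeq.node Γu Δu .nil)).get j = ts.get j := by
              rw [get_addChilds, if_neg hj]
            rw [if_neg (by simp [hj])]
            show _ = seqAts ts j r
            rw [seqAts_eq, seqAts_eq, h1]

theorem childLab_addChild {Pm : MBParams} {t : PNSeq Pm} {p : List ℕ} {v : PNSeq Pm}
    (h : PSubAt t p v) (l : PLab Pm) (Γu Δu : Finset (MBPForm Pm)) :
    ∀ q i', childLab (t.addChild p l (.node Γu Δu .nil)) q i' =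
      if q = p ∧ i' = v.children.len then some l else childLab t q i' := by
  induction h with
  | here t =>
      cases t with
      | node Γ Δ ts =>
          intro q i'
          rw [children_node]
          cases q with
          | nil =>
              show (PNSeqs.get (ts.snoc l _) i').map Prod.fst = _
              rw [get_snoc]
              by_cases hi : i' = ts.len
              · rw [if_pos hi, if_pos ⟨rfl, hi⟩]; rfl
              · rw [if_neg hi, if_neg (fun h' => hi h'.2)]; rfl
          | cons j r =>
              rw [if_neg (by simp)]
              show childLabs (ts.snoc l _) j r i' = childLabs ts j r i'
              by_cases hj : j = ts.len
              · have h1 : (ts.snoc l (PNSeq.node Γu Δu .nil)).get j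
                    = some (l, PNSeq.node Γu Δu .nil) := by rw [get_snoc, if_pos hj]
                rw [childLabs_get' h1,
                  childLabs_none (show ts.get j = none by rw [hj]; exact get_len ts)]
                cases r with
                | nil => rfl
                | cons r0 r1 => rfl
              · have h1 : (ts.snoc l (PNSeq.node Γu Δu .nil)).get j = ts.get j := by
                  rw [get_snoc, if_neg hj]
                rw [childLabs_eq, childLabs_eq, h1]
  | there hg hs ih =>
      rename_i Γ Δ ts i l' u v p
      intro q i'
      cases q with
      | nil =>
          rw [if_neg (by simp)]
          show (PNSeqs.get (PNSeqs.addChilds ts i p l _) i').map Prod.fst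
              = (ts.get i').map Prod.fst
          rw [get_addChilds]
          by_cases hi : i' = i
          · rw [if_pos hi]; cases ts.get i' <;> rfl
          · rw [if_neg hi]
      | cons j r =>
          show childLabs (PNSeqs.addChilds ts i p l _) j r i' = _
          by_cases hj : j = i
          · subst hj
            have h1 : (PNSeqs.addChilds ts j p l (PNSeq.node Γu Δu .nil)).get j
                = some (l', u.addChild p l (PNSeq.node Γu Δu .nil)) := by
              rw [get_addChilds, if_pos rfl, hg]; rfl
            have e1 : childLab (PNSeq.node Γ Δ ts) (j :: r) i' = childLab u r i' :=
              childLabs_get' hg r i'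
            rw [childLabs_get' h1, ih r i', e1]
            by_cases hr : r = p ∧ i' = v.children.len
            · rw [if_pos hr, if_pos ⟨by rw [hr.1], hr.2⟩]
            · have : ¬ (j :: r = j :: p ∧ i' = v.children.len) := by
                simp only [List.cons.injEq, true_and]; tauto
              rw [if_neg hr, if_neg this]
          · have h1 : (PNSeqs.addChilds ts i p l (PNSeq.node Γu Δu .nil)).get j = ts.get j := by
              rw [get_addChilds, if_neg hj]
            have : ¬ (j :: r = i :: p ∧ i' = v.children.len) := by
              simp only [List.cons.injEq]; tauto
            rw [if_neg this]
            show _ = childLabs ts j r i'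
            rw [childLabs_eq, childLabs_eq, h1]
mutual
theorem setSeq_self {Pm : MBParams} :
    ∀ (t : PNSeq Pm) (p : List ℕ) (Γ Δ : Finset (MBPForm Pm)),
      seqAt t p = some (Γ, Δ) → t.setSeq p Γ Δ = t
  | .node Γ₀ Δ₀ ts, [], Γ, Δ, h => by
      have h' : (Γ₀, Δ₀) = (Γ, Δ) := by
        have : some (Γ₀, Δ₀) = some (Γ, Δ) := h
        exact Option.some.inj this
      obtain ⟨h1, h2⟩ := Prod.mk.injEq _ _ _ _ ▸ h'
      simp [PNSeq.setSeq, h1, h2]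
  | .node Γ₀ Δ₀ ts, i :: p, Γ, Δ, h => by
      show PNSeq.node Γ₀ Δ₀ (PNSeqs.setSeqs ts i p Γ Δ) = _
      rw [setSeqs_self ts i p Γ Δ h]
theorem setSeqs_self {Pm : MBParams} :
    ∀ (ts : PNSeqs Pm) (i : ℕ) (p : List ℕ) (Γ Δ : Finset (MBPForm Pm)),
      seqAts ts i p = some (Γ, Δ) → PNSeqs.setSeqs ts i p Γ Δ = ts
  | .nil, i, p, Γ, Δ, h => by cases i <;> exact absurd h (by simp [seqAts])
  | .cons l t ts, 0, p, Γ, Δ, h => by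
      show PNSeqs.cons l (t.setSeq p Γ Δ) ts = _
      rw [setSeq_self t p Γ Δ h]
  | .cons l t ts, n+1, p, Γ, Δ, h => by
      show PNSeqs.cons l t (PNSeqs.setSeqs ts n p Γ Δ) = _
      rw [setSeqs_self ts n p Γ Δ h]
end

theorem val_neg {Pm : MBParams} {M : MBPRealization Pm} {A : MBPForm Pm} {s : M.F.S} :
    s ∈ M.val (MBPForm.neg A) ↔ s ∉ M.val A := Iff.rfl
theorem val_conj {Pm : MBParams} {M : MBPRealization Pm} {A B : MBPForm Pm} {s : M.F.S} :
    s ∈ M.val (MBPForm.conj A B) ↔ s ∈ M.val A ∧ s ∈ M.val B := Iff.rfl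
theorem val_top {Pm : MBParams} {M : MBPRealization Pm} {s : M.F.S} :
    s ∈ M.val (MBPForm.top) := Set.mem_univ s
theorem val_bot {Pm : MBParams} {M : MBPRealization Pm} {s : M.F.S} :
    s ∉ M.val (MBPForm.bot) := fun h => h
theorem val_boxe {Pm : MBParams} {M : MBPRealization Pm} {α : ℝ} {h1 : α ∈ Pm.J}
    {h2 : 0 < α} {A : MBPForm Pm} {s : M.F.S} :
    s ∈ M.val (MBPForm.boxe α h1 h2 A) ↔ ∀ u, M.F.R s u = α → u ∈ M.val A := Iff.rfl
theorem val_boxo {Pm : MBParams} {M : MBPRealization Pm} {α : ℝ} {h1 : α ∈ Pm.J}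
    {A : MBPForm Pm} {s : M.F.S} :
    s ∈ M.val (MBPForm.boxo α h1 A) ↔ ∀ u, α < M.F.R s u → u ∈ M.val A := Iff.rfl
theorem val_boxc0 {Pm : MBParams} {M : MBPRealization Pm} {A : MBPForm Pm} {s : M.F.S} :
    s ∈ M.val (MBPForm.boxc0 A) ↔ ∀ u, u ∈ M.val A := Iff.rfl

theorem useValid' {Pm : MBParams} {C u : PNSeq Pm} {M : MBPRealization Pm} {E : List ℕ → M.F.S}
    (hv : PNSValid u) (hE : PIsEmb M C E)
    (hlab : ∀ q i, childLab u q i = childLab C q i)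
    (hseq : ∀ q Γ₂ Δ₂, seqAt u q = some (Γ₂, Δ₂) →
      (∀ A ∈ Γ₂, E q ∈ M.val A) ∧ (∀ A ∈ Δ₂, E q ∉ M.val A)) : False :=
  hv M E (emb_iff.mpr fun q i l h => emb_iff.mp hE q i l (hlab q i ▸ h)) (false_iff.mpr hseq)

theorem stepSetSeq {Pm : MBParams} {t : PNSeq Pm} {p p' : List ℕ}
    {Γ Δ Γ' Δ' X Y X' Y' : Finset (MBPForm Pm)}
    (hsp : seqAt t p = some (Γ, Δ)) (hsp' : seqAt t p' = some (Γ', Δ'))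
    (hXΓ : Γ ⊆ X) (hYΔ : Δ ⊆ Y)
    {M : MBPRealization Pm} {E : List ℕ → M.F.S}
    (hE : PIsEmb M (t.setSeq p X Y) E) (hF : PFalseUnder M (t.setSeq p X Y) E)
    (hv : PNSValid (t.setSeq p' X' Y'))
    (key : (∀ A ∈ X', E p' ∈ M.val A) ∧ (∀ A ∈ Y', E p' ∉ M.val A)) : False := by
  have hFC := false_iff.mp hF
  have htq : ∀ q Γ₂ Δ₂, seqAt t q = some (Γ₂, Δ₂) →
      (∀ A ∈ Γ₂, E q ∈ M.val A) ∧ (∀ A ∈ Δ₂, E q ∉ M.val A) := by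
    intro q Γ₂ Δ₂ hs
    by_cases hq : q = p
    · subst hq
      rw [hsp] at hs
      have h := hFC q X Y (by rw [seqAt_setSeq, if_pos rfl, hsp]; rfl)
      simp only [Option.some.injEq, Prod.mk.injEq] at hs
      obtain ⟨h1, h2⟩ := hs; subst h1; subst h2
      exact ⟨fun A hA => h.1 A (hXΓ hA), fun A hA => h.2 A (hYΔ hA)⟩
    · exact hFC q Γ₂ Δ₂ (by rw [seqAt_setSeq, if_neg hq]; exact hs)
  apply useValid' hv hE (fun q i => by rw [childLab_setSeq, childLab_setSeq])
  intro q Γ₂ Δ₂ hs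
  rw [seqAt_setSeq] at hs
  by_cases hq : q = p'
  · subst hq
    rw [if_pos rfl, hsp'] at hs
    simp only [Option.map_some, Option.some.injEq, Prod.mk.injEq] at hs
    obtain ⟨h1, h2⟩ := hs; subst h1; subst h2
    exact key
  · rw [if_neg hq] at hs
    exact htq q Γ₂ Δ₂ hs
theorem sound_aux {Pm : MBParams} {cut : Bool} {t : PNSeq Pm}
    (h : PProvable cut t) : PNSValid t := by
  induction h with
  | @axId cut t p Γ Δ ts A h1 h2 h3 =>
      intro M E hE hF
      have h := hF p Γ Δ ts h1
      exact h.2 A h3 (h.1 A h2)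
  | @axTop cut t p Γ Δ ts h1 h2 =>
      intro M E hE hF
      exact (hF p Γ Δ ts h1).2 _ h2 val_top
  | @axBot cut t p Γ Δ ts h1 h2 =>
      intro M E hE hF
      exact val_bot ((hF p Γ Δ ts h1).1 _ h2)
  | @axBoxO1 cut t p Γ Δ ts A h1 h2 =>
      intro M E hE hF
      exact (hF p Γ Δ ts h1).2 _ h2 (val_boxo.mpr fun u hu =>
        absurd (M.F.mem_Icc (E p) u).2 (not_le.mpr hu))
  | @cutR t p Γ Δ ts A h1 h2 h3 ih2 ih3 =>
      intro M E hE hF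
      have hsp := (subAt_char h1).1
      have hE' : PIsEmb M (t.setSeq p Γ Δ) E := by
        rw [setSeq_self t p Γ Δ hsp]; exact hE
      have hF' : PFalseUnder M (t.setSeq p Γ Δ) E := by
        rw [setSeq_self t p Γ Δ hsp]; exact hF
      have h := hF p Γ Δ ts h1
      by_cases hA : E p ∈ M.val A
      · exact stepSetSeq hsp hsp subset_rfl subset_rfl hE' hF' ih3
          ⟨(Finset.forall_mem_insert _ _ _).mpr ⟨hA, h.1⟩, h.2⟩
      · exact stepSetSeq hsp hsp subset_rfl subset_rfl hE' hF' ih2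
          ⟨h.1, (Finset.forall_mem_insert _ _ _).mpr ⟨hA, h.2⟩⟩
  | @wL cut t p Γ Δ ts A h1 h2 ih =>
      intro M E hE hF
      have hsp := (subAt_char h1).1
      have ih' : PNSValid (t.setSeq p Γ Δ) := by
        rw [setSeq_self t p Γ Δ hsp]; exact ih
      have hFC := false_iff.mp hF
      have hCp := hFC p (insert A Γ) Δ (by rw [seqAt_setSeq, if_pos rfl, hsp]; rfl)
      exact stepSetSeq hsp hsp (Finset.subset_insert _ _) subset_rfl hE hF ih'
        ⟨fun B hB => hCp.1 B (Finset.mem_insert_of_mem hB), hCp.2⟩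
  | @wR cut t p Γ Δ ts A h1 h2 ih =>
      intro M E hE hF
      have hsp := (subAt_char h1).1
      have ih' : PNSValid (t.setSeq p Γ Δ) := by
        rw [setSeq_self t p Γ Δ hsp]; exact ih
      have hFC := false_iff.mp hF
      have hCp := hFC p Γ (insert A Δ) (by rw [seqAt_setSeq, if_pos rfl, hsp]; rfl)
      exact stepSetSeq hsp hsp subset_rfl (Finset.subset_insert _ _) hE hF ih'
        ⟨hCp.1, fun B hB => hCp.2 B (Finset.mem_insert_of_mem hB)⟩
  | @negL cut t p Γ Δ ts A h1 h2 ih =>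
      intro M E hE hF
      have hsp := (subAt_char h1).1
      have hFC := false_iff.mp hF
      have hCp := hFC p (insert (MBPForm.neg A) Γ) Δ
        (by rw [seqAt_setSeq, if_pos rfl, hsp]; rfl)
      have hnA : E p ∉ M.val A := val_neg.mp (hCp.1 _ (Finset.mem_insert_self _ _))
      exact stepSetSeq hsp hsp (Finset.subset_insert _ _) subset_rfl hE hF ih
        ⟨fun B hB => hCp.1 B (Finset.mem_insert_of_mem hB),
         (Finset.forall_mem_insert _ _ _).mpr ⟨hnA, hCp.2⟩⟩
  | @negR cut t p Γ Δ ts A h1 h2 ih =>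
      intro M E hE hF
      have hsp := (subAt_char h1).1
      have hFC := false_iff.mp hF
      have hCp := hFC p Γ (insert (MBPForm.neg A) Δ)
        (by rw [seqAt_setSeq, if_pos rfl, hsp]; rfl)
      have hA : E p ∈ M.val A := by
        by_contra hh
        exact hCp.2 _ (Finset.mem_insert_self _ _) (val_neg.mpr hh)
      exact stepSetSeq hsp hsp subset_rfl (Finset.subset_insert _ _) hE hF ih
        ⟨(Finset.forall_mem_insert _ _ _).mpr ⟨hA, hCp.1⟩,
         fun B hB => hCp.2 B (Finset.mem_insert_of_mem hB)⟩
  | @andL cut t p Γ Δ ts A B h1 h2 ih =>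
      intro M E hE hF
      have hsp := (subAt_char h1).1
      have hFC := false_iff.mp hF
      have hCp := hFC p (insert (MBPForm.conj A B) Γ) Δ
        (by rw [seqAt_setSeq, if_pos rfl, hsp]; rfl)
      have hAB := val_conj.mp (hCp.1 _ (Finset.mem_insert_self _ _))
      exact stepSetSeq hsp hsp (Finset.subset_insert _ _) subset_rfl hE hF ih
        ⟨(Finset.forall_mem_insert _ _ _).mpr ⟨hAB.1,
          (Finset.forall_mem_insert _ _ _).mpr ⟨hAB.2,
            fun C hC => hCp.1 C (Finset.mem_insert_of_mem hC)⟩⟩, hCp.2⟩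
  | @andR cut t p Γ Δ ts A B h1 h2 h3 ih1 ih2 =>
      intro M E hE hF
      have hsp := (subAt_char h1).1
      have hFC := false_iff.mp hF
      have hCp := hFC p Γ (insert (MBPForm.conj A B) Δ)
        (by rw [seqAt_setSeq, if_pos rfl, hsp]; rfl)
      have hnAB := hCp.2 _ (Finset.mem_insert_self _ _)
      by_cases hA : E p ∈ M.val A
      · have hnB : E p ∉ M.val B := fun hB => hnAB (val_conj.mpr ⟨hA, hB⟩)
        exact stepSetSeq hsp hsp subset_rfl (Finset.subset_insert _ _) hE hF ih2
          ⟨hCp.1, (Finset.forall_mem_insert _ _ _).mpr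
            ⟨hnB, fun C hC => hCp.2 C (Finset.mem_insert_of_mem hC)⟩⟩
      · exact stepSetSeq hsp hsp subset_rfl (Finset.subset_insert _ _) hE hF ih1
          ⟨hCp.1, (Finset.forall_mem_insert _ _ _).mpr
            ⟨hA, fun C hC => hCp.2 C (Finset.mem_insert_of_mem hC)⟩⟩
  | @boxL cut t p Γ Δ ts i l u Γ' Δ' ts' A b h1 hget h1' hc1 h2 ih =>
      intro M E hE hF
      have hsp := (subAt_char h1).1
      have hsp' := (subAt_char h1').1
      have hne : ¬(p ++ [i] = p) := by
        intro hcontra; simpa using congrArg List.length hcontra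
      have hFC := false_iff.mp hF
      have hCp := hFC p (insert (b.box A) Γ) Δ
        (by rw [seqAt_setSeq, if_pos rfl, hsp]; rfl)
      have hCpi := hFC (p ++ [i]) Γ' Δ'
        (by rw [seqAt_setSeq, if_neg hne]; exact hsp')
      have hbox := hCp.1 _ (Finset.mem_insert_self _ _)
      have hcond := emb_iff.mp hE p i l
        (by rw [childLab_setSeq, (subAt_char h1).2.1 i]; simp only [children_node]; rw [hget]; rfl)
      have hA : E (p ++ [i]) ∈ M.val A := by
        cases b with
        | e α hα h0 =>
            cases l with
            | eq β hβ hβ0 =>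
                have hc : M.F.R (E p) (E (p ++ [i])) = β := hcond
                have he : α = β := hc1
                exact val_boxe.mp hbox _ (by rw [hc, ← he])
            | o β hβ hβ1 => exact hc1.elim
            | c0 => exact hc1.elim
        | o α hα =>
            cases l with
            | eq β hβ hβ0 =>
                have hc : M.F.R (E p) (E (p ++ [i])) = β := hcond
                have hlt : α < β := hc1
                exact val_boxo.mp hbox _ (by rw [hc]; exact hlt)
            | o β hβ hβ1 =>
                have hlt : α < β := hc1
                have hc : β < M.F.R (E p) (E (p ++ [i])) := hcond
                exact val_boxo.mp hbox _ (lt_trans hlt hc)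
            | c0 => exact hc1.elim
      exact stepSetSeq hsp hsp' (Finset.subset_insert _ _) subset_rfl hE hF ih
        ⟨(Finset.forall_mem_insert _ _ _).mpr ⟨hA, hCpi.1⟩, hCpi.2⟩
  | @boxLsym cut t p Γ Δ ts i l u Γ' Δ' ts' A b h1 hget h1' hc1 h2 ih =>
      intro M E hE hF
      have hsp := (subAt_char h1).1
      have hsp' := (subAt_char h1').1
      have hne : ¬(p = p ++ [i]) := by
        intro hcontra; simpa using congrArg List.length hcontra
      have hFC := false_iff.mp hF
      have hCpi := hFC (p ++ [i]) (insert (b.box A) Γ') Δ'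
        (by rw [seqAt_setSeq, if_pos rfl, hsp']; rfl)
      have hCpp := hFC p Γ Δ
        (by rw [seqAt_setSeq, if_neg hne]; exact hsp)
      have hbox := hCpi.1 _ (Finset.mem_insert_self _ _)
      have hcond := emb_iff.mp hE p i l
        (by rw [childLab_setSeq, (subAt_char h1).2.1 i]; simp only [children_node]; rw [hget]; rfl)
      have hsym : M.F.R (E (p ++ [i])) (E p) = M.F.R (E p) (E (p ++ [i])) :=
        M.F.symm _ _
      have hA : E p ∈ M.val A := by
        cases b with
        | e α hα h0 =>
            cases l with
            | eq β hβ hβ0 =>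
                have hc : M.F.R (E p) (E (p ++ [i])) = β := hcond
                have he : α = β := hc1
                exact val_boxe.mp hbox _ (by rw [hsym, hc, ← he])
            | o β hβ hβ1 => exact hc1.elim
            | c0 => exact hc1.elim
        | o α hα =>
            cases l with
            | eq β hβ hβ0 =>
                have hc : M.F.R (E p) (E (p ++ [i])) = β := hcond
                have hlt : α < β := hc1
                exact val_boxo.mp hbox _ (by rw [hsym, hc]; exact hlt)
            | o β hβ hβ1 =>
                have hlt : α < β := hc1
                have hc : β < M.F.R (E p) (E (p ++ [i])) := hcond
                exact val_boxo.mp hbox _ (by rw [hsym]; exact lt_trans hlt hc)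
            | c0 => exact hc1.elim
      exact stepSetSeq hsp' hsp (Finset.subset_insert _ _) subset_rfl hE hF ih
        ⟨(Finset.forall_mem_insert _ _ _).mpr ⟨hA, hCpp.1⟩, hCpp.2⟩
  | @boxLself cut t p Γ Δ ts A b h1 hc2 h2 ih =>
      intro M E hE hF
      have hsp := (subAt_char h1).1
      have hFC := false_iff.mp hF
      have hCp := hFC p (insert (b.box A) Γ) Δ
        (by rw [seqAt_setSeq, if_pos rfl, hsp]; rfl)
      have hbox := hCp.1 _ (Finset.mem_insert_self _ _)
      have hA : E p ∈ M.val A := by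
        cases b with
        | e α hα h0 =>
            have he : α = 1 := hc2
            exact val_boxe.mp hbox (E p) (by rw [he]; exact (M.F.eq_one_iff _ _).mpr rfl)
        | o α hα =>
            have hne1 : α ≠ 1 := hc2
            refine val_boxo.mp hbox (E p) ?_
            rw [show M.F.R (E p) (E p) = (1:ℝ) from (M.F.eq_one_iff _ _).mpr rfl]
            exact lt_of_le_of_ne (Pm.subI hα).2 hne1
      exact stepSetSeq hsp hsp (Finset.subset_insert _ _) subset_rfl hE hF ih
        ⟨(Finset.forall_mem_insert _ _ _).mpr
          ⟨hA, fun B hB => hCp.1 B (Finset.mem_insert_of_mem hB)⟩, hCp.2⟩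
  | @boxC0 cut t p Γ Δ ts q'' Γ'' Δ'' ts'' A h1 h1'' h2 ih =>
      intro M E hE hF
      have hsp := (subAt_char h1).1
      have hspq := (subAt_char h1'').1
      have hFC := false_iff.mp hF
      have hCq := hFC q'' (insert (MBPForm.boxc0 A) Γ'') Δ''
        (by rw [seqAt_setSeq, if_pos rfl, hspq]; rfl)
      have hbox := hCq.1 _ (Finset.mem_insert_self _ _)
      have hA : E p ∈ M.val A := val_boxc0.mp hbox (E p)
      have hGD : (∀ B ∈ Γ, E p ∈ M.val B) ∧ (∀ B ∈ Δ, E p ∉ M.val B) := by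
        by_cases hpq : p = q''
        · subst hpq
          rw [hsp] at hspq
          simp only [Option.some.injEq, Prod.mk.injEq] at hspq
          obtain ⟨hg1, hg2⟩ := hspq; subst hg1; subst hg2
          exact ⟨fun B hB => hCq.1 B (Finset.mem_insert_of_mem hB), hCq.2⟩
        · exact hFC p Γ Δ (by rw [seqAt_setSeq, if_neg hpq]; exact hsp)
      exact stepSetSeq hspq hsp (Finset.subset_insert _ _) subset_rfl hE hF ih
        ⟨(Finset.forall_mem_insert _ _ _).mpr ⟨hA, hGD.1⟩, hGD.2⟩
  | @eqRself cut t p Γ Δ ts A h1 h2 ih =>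
      intro M E hE hF
      have hsp := (subAt_char h1).1
      have hFC := false_iff.mp hF
      have hCp := hFC p Γ (insert (MBPForm.boxe 1 Pm.one_mem one_pos A) Δ)
        (by rw [seqAt_setSeq, if_pos rfl, hsp]; rfl)
      have hnb := hCp.2 _ (Finset.mem_insert_self _ _)
      have hnA : E p ∉ M.val A := by
        intro hmem
        exact hnb (val_boxe.mpr fun u hu => ((M.F.eq_one_iff _ _).mp hu) ▸ hmem)
      exact stepSetSeq hsp hsp subset_rfl (Finset.subset_insert _ _) hE hF ih
        ⟨hCp.1, (Finset.forall_mem_insert _ _ _).mpr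
          ⟨hnA, fun B hB => hCp.2 B (Finset.mem_insert_of_mem hB)⟩⟩
  | @boxR cut t p Γ Δ ts A l h1 h2 ih =>
      intro M E hE hF
      have hsp := (subAt_char h1).1
      have hFC := false_iff.mp hF
      have hCp := hFC p Γ (insert (l.box A) Δ)
        (by rw [seqAt_setSeq, if_pos rfl, hsp]; rfl)
      have hnb := hCp.2 _ (Finset.mem_insert_self _ _)
      have hex : ∃ w, PLabCond l (M.F.R (E p) w) ∧ w ∉ M.val A := by
        cases l with
        | eq α hα h0 =>
            have hnb' : ¬ ∀ u, M.F.R (E p) u = α → u ∈ M.val A := hnb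
            push_neg at hnb'
            obtain ⟨w, hw1, hw2⟩ := hnb'
            exact ⟨w, hw1, hw2⟩
        | o α hα hne1 =>
            have hnb' : ¬ ∀ u, α < M.F.R (E p) u → u ∈ M.val A := hnb
            push_neg at hnb'
            obtain ⟨w, hw1, hw2⟩ := hnb'
            exact ⟨w, hw1, hw2⟩
        | c0 =>
            have hnb' : ¬ ∀ u, u ∈ M.val A := hnb
            push_neg at hnb'
            obtain ⟨w, hw2⟩ := hnb'
            exact ⟨w, trivial, hw2⟩
      obtain ⟨w, hwc, hwA⟩ := hex
      set E' : List ℕ → M.F.S := fun q => if q = p ++ [ts.len] then w else E q with hE'def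
      have hne : ¬(p ++ [ts.len] = p) := by
        intro hcontra; simpa using congrArg List.length hcontra
      have e1 : E' p = E p := if_neg (fun h => hne h.symm)
      have e2 : E' (p ++ [ts.len]) = w := if_pos rfl
      have hlabnone : ∀ i', childLab t (p ++ [ts.len]) i' = none := by
        intro i'
        have := (subAt_char h1).2.2.2 ts.len [] i'
        rw [this]
        show ((ts.get ts.len).bind _) = none
        rw [get_len]
        rfl
      apply ih M E'
      · -- embedding
        refine emb_iff.mpr ?_
        intro q i' l' hc
        rw [childLab_addChild h1 l ∅ {A}] at hc
        by_cases hcnd : q = p ∧ i' = (PNSeq.node Γ Δ ts).children.len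
        · rw [if_pos hcnd] at hc
          obtain ⟨hq, hi⟩ := hcnd
          have hl : l' = l := (Option.some.inj hc).symm
          subst hq; subst hi; subst hl
          show PLabCond l' (M.F.R (E' q) (E' (q ++ [ts.len])))
          rw [e1, e2]
          exact hwc
        · rw [if_neg hcnd] at hc
          have hq1 : q ≠ p ++ [ts.len] := by
            intro hq
            rw [hq] at hc
            rw [hlabnone i'] at hc
            cases hc
          have hq2 : q ++ [i'] ≠ p ++ [ts.len] := by
            intro hq
            obtain ⟨ha, hb⟩ := List.append_inj' hq rfl
            have hib : i' = ts.len := by injection hb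
            exact hcnd ⟨ha, hib⟩
          have e3 : E' q = E q := if_neg hq1
          have e4 : E' (q ++ [i']) = E (q ++ [i']) := if_neg hq2
          rw [e3, e4]
          exact emb_iff.mp hE q i' l' (by rw [childLab_setSeq]; exact hc)
      · -- falsity
        refine false_iff.mpr ?_
        intro q Γ₂ Δ₂ hs
        rw [seqAt_addChild h1 l ∅ {A}] at hs
        by_cases hq : q = p ++ [(PNSeq.node Γ Δ ts).children.len]
        · rw [if_pos hq] at hs
          simp only [Option.some.injEq, Prod.mk.injEq] at hs
          obtain ⟨hg1, hg2⟩ := hs; subst hg1; subst hg2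
          have e5 : E' q = w := by rw [hq]; exact e2
          rw [e5]
          constructor
          · intro B hB; exact absurd hB (Finset.notMem_empty B)
          · intro B hB
            rw [Finset.mem_singleton] at hB
            subst hB
            exact hwA
        · rw [if_neg hq] at hs
          have e6 : E' q = E q := if_neg hq
          rw [e6]
          by_cases hqp : q = p
          · subst hqp
            rw [hsp] at hs
            simp only [Option.some.injEq, Prod.mk.injEq] at hs
            obtain ⟨hg1, hg2⟩ := hs; subst hg1; subst hg2
            exact ⟨hCp.1, fun B hB => hCp.2 B (Finset.mem_insert_of_mem hB)⟩
          · exact hFC q Γ₂ Δ₂ (by rw [seqAt_setSeq, if_neg hqp]; exact hs)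

/-- Soundness of NSMB+: if a nested-sequent of MB+ is
provable in NSMB+, then it is valid. -/
theorem soundness_NSMBplus {Pm : MBParams} (t : PNSeq Pm)
    (h : PProvable true t) : PNSValid t := by
  exact sound_aux h

end MBQL
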